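/- Let G ⊆ ℝ^d be a compact nonempty set such that a closed ball of radius λ > 0 rolls freely in G and a closed ball of radius r > 0 rolls freely in cl(Gᶜ). Then G is r-convex, i.e., G = C_r(G). -/

import Mathlib

/-- A ball of radius `ρ` rolls freely in `A`. -/
def RollsFreely {d : ℕ} (ρ : ℝ) (A : Set (EuclideanSpace ℝ (Fin d))) : Prop :=
  ∀ a ∈ frontier A, ∃ x, a ∈ Metric.closedBall x ρ ∧ Metric.closedBall x ρ ⊆ A

/-- The `r`-convex hull of `A`. -/
def rHull {d : ℕ} (r : ℝ) (A : Set (EuclideanSpace ℝ (Fin d))) :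
    Set (EuclideanSpace ℝ (Fin d)) :=
  ⋂ x ∈ {x : EuclideanSpace ℝ (Fin d) | Metric.ball x r ∩ A = ∅}, (Metric.ball x r)ᶜ

open Metric Set

lemma dist_ge_of_ball_disjoint {E : Type*} [NormedAddCommGroup E] [NormedSpace ℝ E]
    {x y : E} {ε δ : ℝ} (hε : 0 < ε) (hδ : 0 < δ)
    (h : Metric.ball x ε ∩ Metric.ball y δ = ∅) : ε + δ ≤ dist x y := by
  by_contra hlt
  push_neg at hlt
  set t : ℝ := ε / (ε + δ) with ht
  have hεδ : 0 < ε + δ := by linarith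
  have hp : AffineMap.lineMap x y t ∈ Metric.ball x ε ∩ Metric.ball y δ := by
    constructor
    · rw [mem_ball, dist_lineMap_left]
      have : ‖t‖ = t := Real.norm_of_nonneg (by positivity)
      rw [this]
      calc t * dist x y < t * (ε + δ) := by
            apply mul_lt_mul_of_pos_left hlt (by positivity)
        _ = ε := by rw [ht]; field_simp
    · rw [mem_ball, dist_lineMap_right]
      have h1t' : 1 - t = δ / (ε + δ) := by rw [ht]; field_simp; ring
      have h1t : ‖(1:ℝ) - t‖ = 1 - t := by
        rw [Real.norm_eq_abs, abs_of_nonneg]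
        have : t ≤ 1 := by rw [ht, div_le_one hεδ]; linarith
        linarith
      rw [h1t]
      calc (1 - t) * dist x y < (1 - t) * (ε + δ) := by
            apply mul_lt_mul_of_pos_left hlt (by rw [h1t']; positivity)
        _ = δ := by rw [h1t']; field_simp
  rw [h] at hp
  exact hp

/-- If `G` is compact and nonempty, a ball of radius `λ` rolls freely in `G`
and a ball of radius `r` rolls freely in `cl(Gᶜ)`, then `G` is `r`-convex. -/
theorem rconvex_of_rolling {d : ℕ} {G : Set (EuclideanSpace ℝ (Fin d))}
    (hcomp : IsCompact G) (hne : G.Nonempty) {l r : ℝ} (hl : 0 < l) (hr : 0 < r)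
    (hroll₁ : RollsFreely l G) (hroll₂ : RollsFreely r (closure Gᶜ)) :
    G = rHull r G := by
  have hG : IsClosed G := hcomp.isClosed
  -- key fact: an open subset of `closure Gᶜ` is disjoint from `G`
  have key : ∀ U : Set (EuclideanSpace ℝ (Fin d)), IsOpen U → U ⊆ closure Gᶜ →
      U ∩ G = ∅ := by
    intro U hU hUsub
    rw [Set.eq_empty_iff_forall_notMem]
    rintro g ⟨hgU, hgG⟩
    have hgfr : g ∈ frontier G := by
      rw [frontier_eq_closure_inter_closure]
      exact ⟨subset_closure hgG, hUsub hgU⟩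
    obtain ⟨x', hg1, hg2⟩ := hroll₁ g hgfr
    have hgcl : g ∈ closure (Metric.ball x' l) := by
      rw [closure_ball x' (ne_of_gt hl)]; exact hg1
    obtain ⟨p, hpU, hpb⟩ := (_root_.mem_closure_iff.mp hgcl) U hU hgU
    have hVG : (U ∩ Metric.ball x' l) ∩ Gᶜ = ∅ := by
      rw [Set.eq_empty_iff_forall_notMem]
      rintro q ⟨⟨-, hq2⟩, hq3⟩
      exact hq3 (hg2 (ball_subset_closedBall hq2))
    have hsub := (hU.inter (Metric.isOpen_ball (x := x') (ε := l))).inter_closure (t := Gᶜ)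
    rw [hVG, closure_empty] at hsub
    exact hsub ⟨⟨hpU, hpb⟩, hUsub hpU⟩
  apply Set.Subset.antisymm
  · -- easy inclusion
    intro g hg
    simp only [rHull, Set.mem_iInter, Set.mem_setOf_eq, Set.mem_compl_iff]
    intro x hx hgx
    exact (Set.eq_empty_iff_forall_notMem.mp hx) g ⟨hgx, hg⟩
  · intro z hz
    by_contra hzG
    have hmem : ∀ c, Metric.ball c r ∩ G = ∅ → z ∉ Metric.ball c r := by
      intro c hc
      simp only [rHull, Set.mem_iInter, Set.mem_setOf_eq, Set.mem_compl_iff] at hz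
      exact hz c hc
    obtain ⟨a, haG, hdist⟩ := hcomp.exists_infDist_eq_dist hne z
    set ρ := dist z a with hρdef
    have hρ : 0 < ρ := by
      rw [← hdist]
      exact (hG.notMem_iff_infDist_pos hne).mp hzG
    have hballz : Metric.ball z ρ ∩ G = ∅ := by
      rw [Set.eq_empty_iff_forall_notMem]
      rintro y ⟨hy1, hy2⟩
      have : ρ ≤ dist z y := hdist ▸ Metric.infDist_le_dist_of_mem hy2
      rw [mem_ball, dist_comm] at hy1
      linarith
    by_cases hcase : r ≤ ρ
    · exact hmem z (by
        rw [Set.eq_empty_iff_forall_notMem]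
        rintro y ⟨hy1, hy2⟩
        exact (Set.eq_empty_iff_forall_notMem.mp hballz) y
          ⟨Metric.ball_subset_ball hcase hy1, hy2⟩) (Metric.mem_ball_self hr)
    · push_neg at hcase
      -- `a` is on the frontier of `G`
      have haGc : a ∈ closure Gᶜ := by
        have h1 : a ∈ closure (Metric.ball z ρ) := by
          rw [closure_ball z (ne_of_gt hρ)]
          exact mem_closedBall'.mpr (le_of_eq rfl)
        refine closure_mono ?_ h1
        intro y hy
        intro hyG
        exact (Set.eq_empty_iff_forall_notMem.mp hballz) y ⟨hy, hyG⟩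
      have hafr : a ∈ frontier G := by
        rw [frontier_eq_closure_inter_closure]
        exact ⟨subset_closure haG, haGc⟩
      obtain ⟨x₁, ha1, hb1⟩ := hroll₁ a hafr
      have hball1G : Metric.ball x₁ l ⊆ G := ball_subset_closedBall.trans hb1
      have hball1 : Metric.ball x₁ l ∩ closure Gᶜ = ∅ := by
        have h0 : Metric.ball x₁ l ∩ Gᶜ = ∅ := by
          rw [Set.eq_empty_iff_forall_notMem]
          rintro q ⟨hq1, hq2⟩
          exact hq2 (hball1G hq1)
        rw [Set.eq_empty_iff_forall_notMem]
        rintro p hp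
        have := Metric.isOpen_ball.inter_closure (t := Gᶜ) hp
        rw [h0, closure_empty] at this
        exact this
      have hafr2 : a ∈ frontier (closure Gᶜ) := by
        rw [frontier_eq_closure_inter_closure]
        refine ⟨subset_closure haGc, ?_⟩
        -- a ∈ closure ((closure Gᶜ)ᶜ)
        rw [closure_compl, Set.mem_compl_iff]
        intro hint
        have hacl : a ∈ closure (Metric.ball x₁ l) := by
          rw [closure_ball x₁ (ne_of_gt hl)]; exact ha1
        obtain ⟨p, hp1, hp2⟩ := (_root_.mem_closure_iff.mp hacl) _ isOpen_interior hint
        exact (Set.eq_empty_iff_forall_notMem.mp hball1) p ⟨hp2, interior_subset hp1⟩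
      obtain ⟨x₂, ha2, hb2⟩ := hroll₂ a hafr2
      have hball2 : Metric.ball x₂ r ∩ G = ∅ :=
        key _ Metric.isOpen_ball (ball_subset_closedBall.trans hb2)
      have hz_not : z ∉ Metric.ball x₂ r := hmem x₂ hball2
      -- distances
      have hd2 : dist x₂ a = r := by
        have hle : dist a x₂ ≤ r := mem_closedBall.mp ha2
        have hnot : a ∉ Metric.ball x₂ r := fun h =>
          (Set.eq_empty_iff_forall_notMem.mp hball2) a ⟨h, haG⟩
        rw [mem_ball] at hnot
        push_neg at hnot
        rw [dist_comm]
        linarith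
      have hd1 : dist x₁ a = l := by
        have hle : dist a x₁ ≤ l := mem_closedBall.mp ha1
        have hnot : a ∉ Metric.ball x₁ l := fun h =>
          (Set.eq_empty_iff_forall_notMem.mp hball1) a ⟨h, haGc⟩
        rw [mem_ball] at hnot
        push_neg at hnot
        rw [dist_comm]
        linarith
      have hdisj12 : Metric.ball x₁ l ∩ Metric.ball x₂ r = ∅ := by
        rw [Set.eq_empty_iff_forall_notMem]
        rintro p ⟨hp1, hp2⟩
        exact (Set.eq_empty_iff_forall_notMem.mp hball1) p
          ⟨hp1, ball_subset_closedBall.trans hb2 hp2⟩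
      have h12 : dist x₁ x₂ = l + r := by
        have hge := dist_ge_of_ball_disjoint hl hr hdisj12
        have hle : dist x₁ x₂ ≤ l + r := by
          calc dist x₁ x₂ ≤ dist x₁ a + dist a x₂ := dist_triangle _ _ _
            _ = l + r := by rw [hd1, dist_comm, hd2]
        linarith
      have hdisjz1 : Metric.ball z ρ ∩ Metric.ball x₁ l = ∅ := by
        rw [Set.eq_empty_iff_forall_notMem]
        rintro p ⟨hp1, hp2⟩
        exact (Set.eq_empty_iff_forall_notMem.mp hballz) p ⟨hp1, hball1G hp2⟩
      have hz1 : dist z x₁ = ρ + l := by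
        have hge := dist_ge_of_ball_disjoint hρ hl hdisjz1
        have hle : dist z x₁ ≤ ρ + l := by
          calc dist z x₁ ≤ dist z a + dist a x₁ := dist_triangle _ _ _
            _ = ρ + l := by rw [← hρdef, dist_comm, hd1]
        linarith
      -- collinearity via strict convexity
      set t : ℝ := l / (l + r) with htdef
      set s : ℝ := ρ / (ρ + l) with hsdef
      have hlr : (0:ℝ) < l + r := by linarith
      have hρl : (0:ℝ) < ρ + l := by linarith
      have ha_line : a = AffineMap.lineMap x₁ x₂ t := by
        apply eq_lineMap_of_dist_eq_mul_of_dist_eq_mul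
        · rw [h12, htdef, hd1]; field_simp
        · rw [h12, htdef, dist_comm, hd2]; field_simp; ring
      have ha_line2 : a = AffineMap.lineMap z x₁ s := by
        apply eq_lineMap_of_dist_eq_mul_of_dist_eq_mul
        · rw [hz1, hsdef, ← hρdef]; field_simp
        · rw [hz1, hsdef, dist_comm, hd1]; field_simp; ring
      have e12 : t • (x₂ - x₁) + x₁ = s • (x₁ - z) + z := by
        rw [← AffineMap.lineMap_apply_module', ← AffineMap.lineMap_apply_module',
          ← ha_line, ← ha_line2]
      have hvec : (1 - s) • (z - x₂) = (1 - s - t) • (x₁ - x₂) := by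
        linear_combination (norm := module) (-1 : ℝ) • e12
      have h1s : (0:ℝ) < 1 - s := by
        rw [hsdef]
        have : ρ / (ρ + l) < 1 := by rw [div_lt_one hρl]; linarith
        linarith
      have hst : (0:ℝ) ≤ 1 - s - t := by
        have e : 1 - s - t = l * (r - ρ) / ((ρ + l) * (l + r)) := by
          rw [hsdef, htdef]; field_simp; ring
        rw [e]
        have : (0:ℝ) ≤ l * (r - ρ) := by nlinarith
        positivity
      have hnorm : (1 - s) * dist z x₂ = (1 - s - t) * (l + r) := by
        have l1 : ‖(1 - s) • (z - x₂)‖ = (1 - s) * dist z x₂ := by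
          rw [norm_smul, Real.norm_of_nonneg h1s.le, dist_eq_norm]
        have l2 : ‖(1 - s - t) • (x₁ - x₂)‖ = (1 - s - t) * (l + r) := by
          rw [norm_smul, Real.norm_of_nonneg hst, ← dist_eq_norm, h12]
        rw [← l1, hvec, l2]
      have hfin : dist z x₂ = r - ρ := by
        have e : 1 - s - t = l * (r - ρ) / ((ρ + l) * (l + r)) := by
          rw [hsdef, htdef]; field_simp; ring
        have e2 : 1 - s = l / (ρ + l) := by rw [hsdef]; field_simp; ring
        rw [e, e2] at hnorm
        have hl' : l / (ρ + l) ≠ 0 := by positivity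
        apply mul_left_cancel₀ hl'
        rw [hnorm]
        field_simp
      exact hz_not (mem_ball.mpr (by rw [hfin]; linarith))
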